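/- Under consistency, transportability of conditional mean differences over trial participation for treatments a=2 versus a=0 (E[Y^{a=2} − Y^{a=0} | X, S=1] = E[Y^{a=2} − Y^{a=0} | X, S=0]), exchangeability and positivity over treatment a=0 in the index trial, exchangeability and positivity over treatments a=0 and a=2 in the external population, and positivity of external selection, the potential outcome mean E[Y^{a=2} | S=1] equals λ = γ_{0,2} + γ_{1,0} − γ_{0,0}, where γ_{s,a} = E[ E[Y | X, S=s, A=a] | S=1 ]. -/
import Mathlib


open scoped Classical BigOperators
open Finset

noncomputable section

/-- Indicator of a proposition. -/
def ind (P : Prop) : ℝ := if P then 1 else 0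

/-- Expectation with respect to weights `p` on a finite outcome space. -/
def pexp {Ω : Type*} [Fintype Ω] (p : Ω → ℝ) (f : Ω → ℝ) : ℝ := ∑ ω, p ω * f ω

/-- Probability of an event. -/
def prob {Ω : Type*} [Fintype Ω] (p : Ω → ℝ) (B : Ω → Prop) : ℝ :=
  pexp p (fun ω => ind (B ω))

/-- Conditional expectation of `f` given event `B`. -/
def cexp {Ω : Type*} [Fintype Ω] (p : Ω → ℝ) (f : Ω → ℝ) (B : Ω → Prop) : ℝ :=
  pexp p (fun ω => f ω * ind (B ω)) / prob p B

/-- Conditional probability of `B` given `C`. -/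
def cprob {Ω : Type*} [Fintype Ω] (p : Ω → ℝ) (B C : Ω → Prop) : ℝ :=
  prob p (fun ω => B ω ∧ C ω) / prob p C

/-- Conditional outcome mean `g_{s,a}(x) = E[Y | X = x, S = s, A = a]`. -/
def gfun {Ω 𝒳 : Type*} [Fintype Ω] (p : Ω → ℝ) (X : Ω → 𝒳) (S A : Ω → ℕ)
    (Y : Ω → ℝ) (s a : ℕ) (x : 𝒳) : ℝ :=
  cexp p Y (fun ω => X ω = x ∧ S ω = s ∧ A ω = a)

/-- Standardized functional `γ_{s,a} = E[ E[Y | X, S=s, A=a] | S=1 ]`. -/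
def gam {Ω 𝒳 : Type*} [Fintype Ω] (p : Ω → ℝ) (X : Ω → 𝒳) (S A : Ω → ℕ)
    (Y : Ω → ℝ) (s a : ℕ) : ℝ :=
  cexp p (fun ω => gfun p X S A Y s a (X ω)) (fun ω => S ω = 1)

/-- Participation probability `p_s(x) = Pr[S = s | X = x]`. -/
def psel {Ω 𝒳 : Type*} [Fintype Ω] (p : Ω → ℝ) (X : Ω → 𝒳) (S : Ω → ℕ)
    (s : ℕ) (x : 𝒳) : ℝ :=
  cprob p (fun ω => S ω = s) (fun ω => X ω = x)

/-- Treatment probability `e_{s,a}(x) = Pr[A = a | X = x, S = s]`. -/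
def etrt {Ω 𝒳 : Type*} [Fintype Ω] (p : Ω → ℝ) (X : Ω → 𝒳) (S A : Ω → ℕ)
    (s a : ℕ) (x : 𝒳) : ℝ :=
  cprob p (fun ω => A ω = a) (fun ω => X ω = x ∧ S ω = s)

/-- Weight `w_{s,a}(X,S,A) = I(S=s, A=a) p_1(X) / (e_{s,a}(X) p_s(X))`. -/
def wgt {Ω 𝒳 : Type*} [Fintype Ω] (p : Ω → ℝ) (X : Ω → 𝒳) (S A : Ω → ℕ)
    (s a : ℕ) (ω : Ω) : ℝ :=
  ind (S ω = s ∧ A ω = a) * psel p X S 1 (X ω) /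
    (etrt p X S A s a (X ω) * psel p X S s (X ω))

/-- Influence function `Γ_{s,a}(O)`. -/
def Gam {Ω 𝒳 : Type*} [Fintype Ω] (p : Ω → ℝ) (X : Ω → 𝒳) (S A : Ω → ℕ)
    (Y : Ω → ℝ) (s a : ℕ) (ω : Ω) : ℝ :=
  (1 / prob p (fun ω' => S ω' = 1)) *
    (ind (S ω = 1) * (gfun p X S A Y s a (X ω) - gam p X S A Y s a)
      + wgt p X S A s a ω * (Y ω - gfun p X S A Y s a (X ω)))

/-- Variance of `f` under `p`. -/
def pvar {Ω : Type*} [Fintype Ω] (p : Ω → ℝ) (f : Ω → ℝ) : ℝ :=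
  pexp p (fun ω => (f ω - pexp p f) ^ 2)


section Aux

variable {Ω 𝒳 : Type*} [Fintype Ω]

lemma ind_nonneg' (P : Prop) : 0 ≤ ind P := by
  unfold ind; split <;> norm_num

lemma ind_and (P Q : Prop) : ind (P ∧ Q) = ind P * ind Q := by
  classical
  by_cases hP : P <;> by_cases hQ : Q <;> simp [ind, hP, hQ]

lemma prob_nonneg' (p : Ω → ℝ) (hp0 : ∀ ω, 0 ≤ p ω) (B : Ω → Prop) : 0 ≤ prob p B :=
  Finset.sum_nonneg fun ω _ => mul_nonneg (hp0 ω) (ind_nonneg' _)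

lemma prob_pos_of_term (p : Ω → ℝ) (hp0 : ∀ ω, 0 ≤ p ω) (B : Ω → Prop)
    (ω : Ω) (hpω : 0 < p ω) (hB : B ω) : 0 < prob p B := by
  classical
  have h1 : p ω * ind (B ω) ≤ prob p B :=
    Finset.single_le_sum (f := fun ω' => p ω' * ind (B ω'))
      (fun ω' _ => mul_nonneg (hp0 ω') (ind_nonneg' _)) (Finset.mem_univ ω)
  have : p ω * ind (B ω) = p ω := by simp [ind, hB]
  linarith [this ▸ h1]

lemma term_zero_of_prob_zero (p : Ω → ℝ) (hp0 : ∀ ω, 0 ≤ p ω) (B : Ω → Prop)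
    (h : prob p B = 0) (ω : Ω) (hB : B ω) : p ω = 0 := by
  classical
  have h0 := (Finset.sum_eq_zero_iff_of_nonneg
    (fun ω' _ => mul_nonneg (hp0 ω') (ind_nonneg' (B ω')))).mp h ω (Finset.mem_univ ω)
  simpa [ind, hB] using h0

lemma cexp_ext (p : Ω → ℝ) (f g : Ω → ℝ) (B : Ω → Prop)
    (h : ∀ ω, f ω = g ω) : cexp p f B = cexp p g B := by
  unfold cexp pexp
  congr 1
  exact Finset.sum_congr rfl fun ω _ => by simp only [h ω]

lemma cexp_congr_on (p : Ω → ℝ) (f g : Ω → ℝ) (B : Ω → Prop)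
    (h : ∀ ω, B ω → f ω = g ω) : cexp p f B = cexp p g B := by
  classical
  unfold cexp pexp
  congr 1
  refine Finset.sum_congr rfl fun ω _ => ?_
  by_cases hB : B ω
  · simp only [h ω hB]
  · simp [ind, hB]

lemma cexp_add (p : Ω → ℝ) (f g : Ω → ℝ) (B : Ω → Prop) :
    cexp p (fun ω => f ω + g ω) B = cexp p f B + cexp p g B := by
  unfold cexp pexp
  rw [← add_div]
  congr 1
  rw [← Finset.sum_add_distrib]
  exact Finset.sum_congr rfl fun ω _ => by ring

lemma cexp_sub (p : Ω → ℝ) (f g : Ω → ℝ) (B : Ω → Prop) :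
    cexp p (fun ω => f ω - g ω) B = cexp p f B - cexp p g B := by
  unfold cexp pexp
  rw [← sub_div]
  congr 1
  rw [← Finset.sum_sub_distrib]
  exact Finset.sum_congr rfl fun ω _ => by ring

lemma prob_congr (p : Ω → ℝ) (B B' : Ω → Prop) (h : ∀ ω, B ω ↔ B' ω) :
    prob p B = prob p B' := by
  have : B = B' := funext fun ω => propext (h ω)
  rw [this]

/-- Tower property: `E[E[f | X, B] ; B] = E[f ; B]` (unnormalized). -/
lemma tower (p : Ω → ℝ) (hp0 : ∀ ω, 0 ≤ p ω) (X : Ω → 𝒳) (B : Ω → Prop) (f : Ω → ℝ) :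
    ∑ ω, p ω * (cexp p f (fun ω' => X ω' = X ω ∧ B ω') * ind (B ω))
      = ∑ ω, p ω * (f ω * ind (B ω)) := by
  classical
  rw [← Finset.sum_fiberwise_of_maps_to (g := X) (t := Finset.univ.image X)
      (fun ω _ => Finset.mem_image_of_mem X (Finset.mem_univ ω))
      (f := fun ω => p ω * (cexp p f (fun ω' => X ω' = X ω ∧ B ω') * ind (B ω))),
    ← Finset.sum_fiberwise_of_maps_to (g := X) (t := Finset.univ.image X)
      (fun ω _ => Finset.mem_image_of_mem X (Finset.mem_univ ω))
      (f := fun ω => p ω * (f ω * ind (B ω)))]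
  refine Finset.sum_congr rfl fun x _ => ?_
  set D : ℝ := prob p (fun ω => X ω = x ∧ B ω) with hD
  have hfib : ∀ (g : Ω → ℝ),
      ∑ ω ∈ Finset.univ.filter (fun ω => X ω = x), p ω * (g ω * ind (B ω))
        = ∑ ω, p ω * (g ω * ind (X ω = x ∧ B ω)) := by
    intro g
    rw [Finset.sum_filter]
    refine Finset.sum_congr rfl fun ω _ => ?_
    by_cases hx : X ω = x
    · simp [hx, ind_and]
    · simp [ind, hx]
  have hL : ∑ ω ∈ Finset.univ.filter (fun ω => X ω = x),
      p ω * (cexp p f (fun ω' => X ω' = X ω ∧ B ω') * ind (B ω))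
        = cexp p f (fun ω' => X ω' = x ∧ B ω') * D := by
    have step : ∀ ω ∈ Finset.univ.filter (fun ω => X ω = x),
        p ω * (cexp p f (fun ω' => X ω' = X ω ∧ B ω') * ind (B ω))
          = cexp p f (fun ω' => X ω' = x ∧ B ω') * (p ω * ind (B ω)) := by
      intro ω hω
      have hx : X ω = x := by simpa using hω
      rw [hx]; ring
    rw [Finset.sum_congr rfl step, ← Finset.mul_sum]
    congr 1
    have := hfib (fun _ => 1)
    simpa [hD, prob, pexp] using this
  rw [hfib f, hL]
  have hN : ∑ ω, p ω * (f ω * ind (X ω = x ∧ B ω))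
      = pexp p (fun ω => f ω * ind (X ω = x ∧ B ω)) := rfl
  rw [hN]
  by_cases hD0 : D = 0
  · have hterm : ∀ ω, p ω * (f ω * ind (X ω = x ∧ B ω)) = 0 := by
      intro ω
      by_cases hB : X ω = x ∧ B ω
      · rw [term_zero_of_prob_zero p hp0 _ (hD ▸ hD0) ω hB]; ring
      · simp [ind, hB]
    have : pexp p (fun ω => f ω * ind (X ω = x ∧ B ω)) = 0 :=
      Finset.sum_eq_zero fun ω _ => hterm ω
    rw [this, hD0, mul_zero]
  · unfold cexp
    rw [div_mul_cancel₀]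
    exact hD0

end Aux

theorem statement2
    {Ω 𝒳 : Type*} [Fintype Ω] (p : Ω → ℝ)
    (hp0 : ∀ ω, 0 ≤ p ω) (hp1 : ∑ ω, p ω = 1)
    (X : Ω → 𝒳) (S A : Ω → ℕ) (Y : Ω → ℝ) (Ypo : ℕ → Ω → ℝ)
    (hS : 0 < prob p (fun ω => S ω = 1))
    (hcons : ∀ ω a, A ω = a → Ypo a ω = Y ω)
    (hA4' : ∀ x, 0 < prob p (fun ω => X ω = x ∧ S ω = 1) →
      cexp p (fun ω => Ypo 2 ω - Ypo 0 ω) (fun ω => X ω = x ∧ S ω = 1) =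
        cexp p (fun ω => Ypo 2 ω - Ypo 0 ω) (fun ω => X ω = x ∧ S ω = 0))
    (hA2 : ∀ x, 0 < prob p (fun ω => X ω = x ∧ S ω = 1) →
      cexp p (Ypo 0) (fun ω => X ω = x ∧ S ω = 1) =
        cexp p (Ypo 0) (fun ω => X ω = x ∧ S ω = 1 ∧ A ω = 0))
    (hA3 : ∀ x, 0 < prob p (fun ω => X ω = x ∧ S ω = 1) →
      0 < cprob p (fun ω => A ω = 0) (fun ω => X ω = x ∧ S ω = 1))
    (hA5 : ∀ x, 0 < prob p (fun ω => X ω = x ∧ S ω = 1) →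
      0 < cprob p (fun ω => S ω = 0) (fun ω => X ω = x))
    (hA6 : ∀ x, ∀ a ∈ ({0, 2} : Set ℕ), 0 < prob p (fun ω => X ω = x ∧ S ω = 0) →
      cexp p (Ypo a) (fun ω => X ω = x ∧ S ω = 0) =
        cexp p (Ypo a) (fun ω => X ω = x ∧ S ω = 0 ∧ A ω = a))
    (hA7 : ∀ x, ∀ a ∈ ({0, 2} : Set ℕ), 0 < prob p (fun ω => X ω = x ∧ S ω = 0) →
      0 < cprob p (fun ω => A ω = a) (fun ω => X ω = x ∧ S ω = 0)) :
    cexp p (Ypo 2) (fun ω => S ω = 1) =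
      gam p X S A Y 0 2 + gam p X S A Y 1 0 - gam p X S A Y 0 0 := by
  classical
  -- pointwise identification on strata with positive trial probability
  have key : ∀ x, 0 < prob p (fun ω => X ω = x ∧ S ω = 1) →
      cexp p (Ypo 2) (fun ω => X ω = x ∧ S ω = 1)
        = gfun p X S A Y 0 2 x + gfun p X S A Y 1 0 x - gfun p X S A Y 0 0 x := by
    intro x hx
    have hx0 : 0 < prob p (fun ω => X ω = x ∧ S ω = 0) := by
      have h5 := hA5 x hx
      unfold cprob at h5
      have hnum : 0 < prob p (fun ω => S ω = 0 ∧ X ω = x) := by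
        rcases lt_or_eq_of_le (prob_nonneg' p hp0 (fun ω => S ω = 0 ∧ X ω = x)) with h | h
        · exact h
        · rw [← h, zero_div] at h5; exact absurd h5 (lt_irrefl 0)
      rwa [prob_congr p _ _ (fun ω => and_comm)] at hnum
    have hdec : cexp p (Ypo 2) (fun ω => X ω = x ∧ S ω = 1)
        = cexp p (fun ω => Ypo 2 ω - Ypo 0 ω) (fun ω => X ω = x ∧ S ω = 1)
          + cexp p (Ypo 0) (fun ω => X ω = x ∧ S ω = 1) := by
      rw [← cexp_add]
      exact cexp_ext p _ _ _ fun ω => by ring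
    rw [hdec, hA4' x hx, hA2 x hx, cexp_sub,
      hA6 x 0 (by simp) hx0, hA6 x 2 (by simp) hx0]
    have e2 : cexp p (Ypo 2) (fun ω => X ω = x ∧ S ω = 0 ∧ A ω = 2)
        = gfun p X S A Y 0 2 x :=
      cexp_congr_on p _ _ _ fun ω h => hcons ω 2 h.2.2
    have e0 : cexp p (Ypo 0) (fun ω => X ω = x ∧ S ω = 0 ∧ A ω = 0)
        = gfun p X S A Y 0 0 x :=
      cexp_congr_on p _ _ _ fun ω h => hcons ω 0 h.2.2
    have e1 : cexp p (Ypo 0) (fun ω => X ω = x ∧ S ω = 1 ∧ A ω = 0)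
        = gfun p X S A Y 1 0 x :=
      cexp_congr_on p _ _ _ fun ω h => hcons ω 0 h.2.2
    rw [e2, e0, e1]; ring
  -- tower + termwise replacement
  have hnum : pexp p (fun ω => Ypo 2 ω * ind (S ω = 1))
      = pexp p (fun ω =>
          (gfun p X S A Y 0 2 (X ω) + gfun p X S A Y 1 0 (X ω)
            - gfun p X S A Y 0 0 (X ω)) * ind (S ω = 1)) := by
    unfold pexp
    rw [← tower p hp0 X (fun ω => S ω = 1) (Ypo 2)]
    refine Finset.sum_congr rfl fun ω _ => ?_
    by_cases hpω : p ω = 0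
    · rw [hpω]; ring
    · by_cases hSω : S ω = 1
      · have hpos : 0 < p ω := lt_of_le_of_ne (hp0 ω) (Ne.symm hpω)
        have hprob : 0 < prob p (fun ω' => X ω' = X ω ∧ S ω' = 1) :=
          prob_pos_of_term p hp0 _ ω hpos ⟨rfl, hSω⟩
        rw [key (X ω) hprob]
      · simp [ind, hSω]
  unfold gam cexp
  rw [hnum, ← add_div, ← sub_div]
  congr 1
  unfold pexp
  rw [← Finset.sum_add_distrib, ← Finset.sum_sub_distrib]
  exact Finset.sum_congr rfl fun ω _ => by ring
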